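/- The edge set of the complement of the cycle C_n (n ≥ 5) can be partitioned into graphs each of which is the complete graph on n vertices minus two matchings; consequently, for r ≥ 3 and n ≥ 4r+6, any graph H on n vertices whose complement is a (subgraph of a) Hamilton cycle has a fractional K_r-decomposition. -/

import Mathlib

open Finset
open scoped Classical

noncomputable def fracCliqueDecomp {V : Type*} [Fintype V] (G : SimpleGraph V) (r : ℕ) : Prop :=
  ∃ w : Finset V → ℝ, (∀ s, 0 ≤ w s) ∧
    ∀ u v : V, G.Adj u v →
      ∑ s ∈ univ.filter (fun s : Finset V => G.IsNClique r s ∧ u ∈ s ∧ v ∈ s), w s = 1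

open Finset
open scoped Classical

section Aux
variable {V : Type*} [Fintype V]

noncomputable def covW (H : SimpleGraph V) (r : ℕ) (w : Finset V → ℝ) (u v : V) : ℝ :=
  ∑ s ∈ univ.filter (fun s : Finset V => H.IsNClique r s ∧ u ∈ s ∧ v ∈ s), w s

def goodOn (H : SimpleGraph V) (r : ℕ) (A : Finset V) : Prop :=
  ∃ w : Finset V → ℝ, (∀ s, 0 ≤ w s) ∧ (∀ s, w s ≠ 0 → s ⊆ A) ∧
    ∀ u v, u ∈ A → v ∈ A → H.Adj u v → covW H r w u v = 1



lemma cnt1 (A : Finset V) (u : V) (hu : u ∈ A) (k : ℕ) :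
    (((powersetCard (k+1) A)).filter (fun B => u ∈ B)).card = (A.card - 1).choose k := by
  have h1 : (A.erase u).card = A.card - 1 := Finset.card_erase_of_mem hu
  rw [← h1, ← Finset.card_powersetCard]
  refine Finset.card_bij' (fun B _ => B.erase u) (fun C _ => insert u C) ?hi ?hj ?li ?ri
  case hi =>
    intro B hB
    simp only [mem_filter, mem_powersetCard] at hB
    simp only [mem_powersetCard]
    exact ⟨fun x hx => Finset.mem_erase.2 ⟨(Finset.mem_erase.1 hx).1,
      hB.1.1 (Finset.mem_erase.1 hx).2⟩,
      by rw [Finset.card_erase_of_mem hB.2, hB.1.2]; omega⟩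
  case hj =>
    intro C hC
    simp only [mem_powersetCard] at hC
    have huC : u ∉ C := fun h => (Finset.mem_erase.1 (hC.1 h)).1 rfl
    simp only [mem_filter, mem_powersetCard]
    refine ⟨⟨?_, ?_⟩, Finset.mem_insert_self u C⟩
    · intro x hx
      rcases Finset.mem_insert.1 hx with rfl | hx
      · exact hu
      · exact (Finset.mem_erase.1 (hC.1 hx)).2
    · rw [Finset.card_insert_of_notMem huC, hC.2]
  case li =>
    intro B hB
    simp only [mem_filter] at hB
    exact Finset.insert_erase hB.2
  case ri =>
    intro C hC
    simp only [mem_powersetCard] at hC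
    have huC : u ∉ C := fun h => (Finset.mem_erase.1 (hC.1 h)).1 rfl
    exact Finset.erase_insert huC

lemma cnt2 (A : Finset V) (u v : V) (hu : u ∈ A) (hv : v ∈ A) (huv : u ≠ v) (k : ℕ) :
    (((powersetCard (k+2) A)).filter (fun B => u ∈ B ∧ v ∈ B)).card
      = (A.card - 2).choose k := by
  have hvAu : v ∈ A.erase u := Finset.mem_erase.2 ⟨huv.symm, hv⟩
  have h2 : ((A.erase u).erase v).card = A.card - 2 := by
    rw [Finset.card_erase_of_mem hvAu, Finset.card_erase_of_mem hu]; omega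
  rw [← h2, ← Finset.card_powersetCard]
  refine Finset.card_bij' (fun B _ => (B.erase u).erase v)
    (fun C _ => insert u (insert v C)) ?hi ?hj ?li ?ri
  case hi =>
    intro B hB
    simp only [mem_filter, mem_powersetCard] at hB
    obtain ⟨⟨hBA, hBc⟩, huB, hvB⟩ := hB
    simp only [mem_powersetCard]
    constructor
    · intro x hx
      have hx1 := Finset.mem_erase.1 hx
      have hx2 := Finset.mem_erase.1 hx1.2
      exact Finset.mem_erase.2 ⟨hx1.1, Finset.mem_erase.2 ⟨hx2.1, hBA hx2.2⟩⟩
    · rw [Finset.card_erase_of_mem (Finset.mem_erase.2 ⟨huv.symm, hvB⟩),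
        Finset.card_erase_of_mem huB, hBc]; omega
  case hj =>
    intro C hC
    simp only [mem_powersetCard] at hC
    have hvC : v ∉ C := fun h => (Finset.mem_erase.1 (hC.1 h)).1 rfl
    have huC : u ∉ C := fun h => (Finset.mem_erase.1 (Finset.mem_erase.1 (hC.1 h)).2).1 rfl
    have huvC : u ∉ insert v C := by
      simp only [Finset.mem_insert]
      rintro (rfl | h)
      · exact huv rfl
      · exact huC h
    simp only [mem_filter, mem_powersetCard]
    refine ⟨⟨?_, ?_⟩, Finset.mem_insert_self u _, ?_⟩
    · intro x hx
      rcases Finset.mem_insert.1 hx with rfl | hx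
      · exact hu
      · rcases Finset.mem_insert.1 hx with rfl | hx
        · exact hv
        · exact (Finset.mem_erase.1 (Finset.mem_erase.1 (hC.1 hx)).2).2
    · rw [Finset.card_insert_of_notMem huvC, Finset.card_insert_of_notMem hvC, hC.2]
    · exact Finset.mem_insert_of_mem (Finset.mem_insert_self v C)
  case li =>
    intro B hB
    simp only [mem_filter] at hB
    obtain ⟨_, huB, hvB⟩ := hB
    show insert u (insert v ((B.erase u).erase v)) = B
    rw [Finset.insert_erase (Finset.mem_erase.2 ⟨huv.symm, hvB⟩), Finset.insert_erase huB]
  case ri =>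
    intro C hC
    simp only [mem_powersetCard] at hC
    have hvC : v ∉ C := fun h => (Finset.mem_erase.1 (hC.1 h)).1 rfl
    have huC : u ∉ C := fun h => (Finset.mem_erase.1 (Finset.mem_erase.1 (hC.1 h)).2).1 rfl
    have huvC : u ∉ insert v C := by
      simp only [Finset.mem_insert]
      rintro (rfl | h)
      · exact huv rfl
      · exact huC h
    show ((insert u (insert v C)).erase u).erase v = C
    rw [Finset.erase_insert huvC, Finset.erase_insert hvC]

lemma sum_indicator_filter (c : ℝ) (S : Finset (Finset V)) (φ : Finset V → Prop)
    [DecidablePred φ] :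
    ∑ B ∈ univ.filter φ, (if B ∈ S then c else 0) = (S.filter φ).card * c := by
  rw [Finset.sum_ite_mem, Finset.sum_const, nsmul_eq_mul]
  have h : univ.filter φ ∩ S = S.filter φ := by
    ext B; simp [Finset.mem_filter, and_comm]
  rw [h]

end Aux
set_option linter.unusedSectionVars false

section Unif
variable {V : Type*} [Fintype V]

noncomputable def unifW (A : Finset V) (k : ℕ) : Finset V → ℝ :=
  fun B => if B ∈ Finset.powersetCard k A then ((A.card.choose k : ℝ))⁻¹ else 0

lemma unifW_nonneg (A : Finset V) (k : ℕ) (B : Finset V) : 0 ≤ unifW A k B := by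
  unfold unifW; positivity

lemma unifW_support (A : Finset V) (k : ℕ) (B : Finset V) (h : unifW A k B ≠ 0) :
    B ⊆ A ∧ B.card = k := by
  unfold unifW at h
  by_cases hB : B ∈ Finset.powersetCard k A
  · exact Finset.mem_powersetCard.1 hB
  · simp [hB] at h

lemma choose_cast_ne (a k : ℕ) (h : k ≤ a) : ((a.choose k : ℝ)) ≠ 0 := by
  have := Nat.choose_pos h
  exact_mod_cast this.ne'

lemma chooseId (a k : ℕ) (h : k + 1 ≤ a) :
    a * ((a-1).choose k) = (k+1) * a.choose (k+1) := by
  have h1 : 1 ≤ a := le_trans (Nat.le_add_left 1 k) h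
  have h2 := Nat.add_one_mul_choose_eq (a-1) k
  rw [Nat.sub_add_cancel h1] at h2
  rw [h2, Nat.mul_comm]

lemma U0 (A : Finset V) (k : ℕ) (hk : k ≤ A.card) : ∑ B, unifW A k B = 1 := by
  have h := sum_indicator_filter ((A.card.choose k : ℝ))⁻¹ (Finset.powersetCard k A)
    (fun _ => True)
  simp only [Finset.filter_true] at h
  unfold unifW
  rw [h, Finset.card_powersetCard]
  exact mul_inv_cancel₀ (choose_cast_ne _ _ hk)

lemma U1 (A : Finset V) (k : ℕ) (hk : k ≤ A.card) (u : V) (hu : u ∈ A) :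
    ∑ B ∈ Finset.univ.filter (fun B => u ∈ B), unifW A k B = (k : ℝ) / A.card := by
  have ha : 1 ≤ A.card := Finset.card_pos.2 ⟨u, hu⟩
  have ha' : (A.card : ℝ) ≠ 0 := by positivity
  have h := sum_indicator_filter ((A.card.choose k : ℝ))⁻¹ (Finset.powersetCard k A)
    (fun B => u ∈ B)
  unfold unifW
  rw [h]
  cases k with
  | zero =>
    have hemp : ((Finset.powersetCard 0 A).filter (fun B => u ∈ B)) = ∅ := by
      rw [Finset.powersetCard_zero]
      ext B
      simp only [Finset.mem_filter, Finset.mem_singleton, Finset.notMem_empty, iff_false,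
        not_and]
      rintro rfl
      exact Finset.notMem_empty u
    rw [hemp]
    simp
  | succ k =>
    rw [cnt1 A u hu k]
    have hc := choose_cast_ne A.card (k+1) hk
    have hid : (A.card - 1).choose k * A.card = (k+1) * A.card.choose (k+1) := by
      rw [Nat.mul_comm]; exact chooseId A.card k hk
    rw [inv_eq_one_div, mul_one_div, div_eq_div_iff hc ha']
    exact_mod_cast hid

lemma U2 (A : Finset V) (k : ℕ) (hk : k ≤ A.card) (u v : V) (hu : u ∈ A) (hv : v ∈ A)
    (huv : u ≠ v) :
    ∑ B ∈ Finset.univ.filter (fun B => u ∈ B ∧ v ∈ B), unifW A k B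
      = ((k * (k-1) : ℕ) : ℝ) / ((A.card * (A.card - 1) : ℕ) : ℝ) := by
  have ha : 2 ≤ A.card := Finset.one_lt_card.2 ⟨u, hu, v, hv, huv⟩
  have haa : ((A.card * (A.card - 1) : ℕ) : ℝ) ≠ 0 := by
    have : 0 < A.card * (A.card - 1) := by
      apply Nat.mul_pos <;> omega
    exact_mod_cast this.ne'
  have h := sum_indicator_filter ((A.card.choose k : ℝ))⁻¹ (Finset.powersetCard k A)
    (fun B => u ∈ B ∧ v ∈ B)
  unfold unifW
  rw [h]
  match k, hk with
  | 0, hk =>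
    have hemp : ((Finset.powersetCard 0 A).filter (fun B => u ∈ B ∧ v ∈ B)) = ∅ := by
      rw [Finset.powersetCard_zero]
      ext B
      simp only [Finset.mem_filter, Finset.mem_singleton, Finset.notMem_empty, iff_false,
        not_and]
      rintro rfl h'
      exact absurd h' (Finset.notMem_empty u)
    rw [hemp]
    simp
  | 1, hk =>
    have hemp : ((Finset.powersetCard 1 A).filter (fun B => u ∈ B ∧ v ∈ B)) = ∅ := by
      ext B
      simp only [Finset.mem_filter, Finset.mem_powersetCard, Finset.notMem_empty, iff_false,
        not_and]
      rintro ⟨_, hc⟩ hu' hv'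
      have : 2 ≤ B.card := Finset.one_lt_card.2 ⟨u, hu', v, hv', huv⟩
      omega
    rw [hemp]
    simp
  | (m+2), hk =>
    rw [cnt2 A u v hu hv huv m]
    have h1 : A.card * ((A.card -1).choose (m+1)) = (m+2) * A.card.choose (m+2) :=
      chooseId A.card (m+1) hk
    have h2 : (A.card - 1) * ((A.card -2).choose m) = (m+1) * (A.card - 1).choose (m+1) := by
      have h3 := chooseId (A.card - 1) m (by omega)
      have hss : A.card - 1 - 1 = A.card - 2 := by omega
      rw [hss] at h3
      exact h3
    have hkey : ((A.card - 2).choose m) * (A.card * (A.card - 1))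
        = ((m+2) * (m+2-1)) * A.card.choose (m+2) := by
      have e1 : m+2-1 = m+1 := by omega
      rw [e1]
      calc ((A.card - 2).choose m) * (A.card * (A.card - 1))
          = A.card * ((A.card - 1) * ((A.card -2).choose m)) := by ring
        _ = A.card * ((m+1) * (A.card - 1).choose (m+1)) := by rw [h2]
        _ = (m+1) * (A.card * ((A.card -1).choose (m+1))) := by ring
        _ = (m+1) * ((m+2) * A.card.choose (m+2)) := by rw [h1]
        _ = ((m+2) * (m+1)) * A.card.choose (m+2) := by ring
    have hc := choose_cast_ne A.card (m+2) hk
    rw [inv_eq_one_div, mul_one_div, div_eq_div_iff hc haa]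
    exact_mod_cast hkey

end Unif
section SchemeBase
variable {V : Type*} [Fintype V]

lemma schemeBase (A : Finset V) :
    ∃ q : Finset V → ℝ, (∀ B, 0 ≤ q B) ∧
      (∀ B, q B ≠ 0 → B ⊆ A ∧ A.card ≤ 2 * B.card + 2) ∧
      (∑ B, q B) = 1 ∧
      (∀ u ∈ A, ∑ B ∈ Finset.univ.filter (fun B => u ∈ B), q B = 1/2) ∧
      (∀ u v, u ∈ A → v ∈ A → u ≠ v →
        ∑ B ∈ Finset.univ.filter (fun B => u ∈ B ∧ v ∈ B), q B = 1/4) := by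
  classical
  set a := A.card with ha_def
  rcases Nat.even_or_odd a with hpar | hpar
  · -- even case
    obtain ⟨h, hh⟩ := hpar
    have hA2 : a = 2 * h := by omega
    by_cases hh0 : h = 0
    · -- A is empty
      refine ⟨fun B => if B = (∅ : Finset V) then 1 else 0, ?_, ?_, ?_, ?_, ?_⟩
      · intro B; positivity
      · intro B hB
        have : B = ∅ := by by_contra hne; simp [hne] at hB
        subst this
        constructor
        · exact Finset.empty_subset A
        · omega
      · simp
      · intro u hu
        exfalso
        have : A = ∅ := Finset.card_eq_zero.1 (by omega)
        rw [this] at hu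
        exact Finset.notMem_empty u hu
      · intro u v hu _ _
        exfalso
        have : A = ∅ := Finset.card_eq_zero.1 (by omega)
        rw [this] at hu
        exact Finset.notMem_empty u hu
    · have hh1 : 1 ≤ h := by omega
      set p1 : ℝ := (h : ℝ) / (2*h+2) with hp1
      set p2 : ℝ := 1/2 with hp2
      set p3 : ℝ := 1 / (2*h+2) with hp3
      have hden : (2*(h:ℝ)+2) ≠ 0 := by positivity
      refine ⟨fun B => p1 * unifW A (h-1) B + p2 * unifW A h B + p3 * unifW A a B,
        ?_, ?_, ?_, ?_, ?_⟩
      · intro B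
        have h1 := unifW_nonneg A (h-1) B
        have h2 := unifW_nonneg A h B
        have h3 := unifW_nonneg A a B
        have hp1' : 0 ≤ p1 := by rw [hp1]; positivity
        have hp2' : 0 ≤ p2 := by rw [hp2]; norm_num
        have hp3' : 0 ≤ p3 := by rw [hp3]; positivity
        dsimp only
        exact add_nonneg (add_nonneg (mul_nonneg hp1' h1) (mul_nonneg hp2' h2))
          (mul_nonneg hp3' h3)
      · intro B hB
        have : unifW A (h-1) B ≠ 0 ∨ unifW A h B ≠ 0 ∨ unifW A a B ≠ 0 := by
          by_contra hc
          push_neg at hc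
          simp [hc.1, hc.2.1, hc.2.2] at hB
        rcases this with h' | h' | h' <;>
          obtain ⟨hsub, hcard⟩ := unifW_support _ _ _ h' <;> exact ⟨hsub, by omega⟩
      · rw [Finset.sum_add_distrib, Finset.sum_add_distrib, ← Finset.mul_sum, ← Finset.mul_sum,
          ← Finset.mul_sum, U0 A (h-1) (by omega), U0 A h (by omega), U0 A a (by omega)]
        rw [hp1, hp2, hp3]
        field_simp
        ring
      · intro u hu
        rw [Finset.sum_add_distrib, Finset.sum_add_distrib, ← Finset.mul_sum, ← Finset.mul_sum,
          ← Finset.mul_sum, U1 A (h-1) (by omega) u hu, U1 A h (by omega) u hu,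
          U1 A a (by omega) u hu]
        have hc1 : ((h - 1 : ℕ) : ℝ) = (h : ℝ) - 1 := by
          push_cast [Nat.cast_sub hh1]; ring
        have hc2 : ((a : ℕ) : ℝ) = 2*(h:ℝ) := by exact_mod_cast hA2
        rw [hc1, hc2, hp1, hp2, hp3]
        field_simp
        ring
      · intro u v hu hv huv
        have ha2 : 2 ≤ a := Finset.one_lt_card.2 ⟨u, hu, v, hv, huv⟩
        rw [Finset.sum_add_distrib, Finset.sum_add_distrib, ← Finset.mul_sum, ← Finset.mul_sum,
          ← Finset.mul_sum, U2 A (h-1) (by omega) u v hu hv huv, U2 A h (by omega) u v hu hv huv,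
          U2 A a (by omega) u v hu hv huv]
        have hc2 : ((a * (a-1) : ℕ) : ℝ) = 2*(h:ℝ) * (2*h - 1) := by
          rw [hA2]
          push_cast [Nat.cast_sub (by omega : 1 ≤ 2*h)]
          ring
        have haa : (2*(h:ℝ) * (2*h-1)) ≠ 0 := by
          have : (1:ℝ) ≤ h := by exact_mod_cast hh1
          nlinarith
        have hcA : (((h-1) * (h-1-1) : ℕ) : ℝ) = ((h:ℝ)-1) * ((h:ℝ)-2) := by
          by_cases hh2 : h = 1
          · subst hh2; norm_num
          · push_cast [Nat.cast_sub hh1, Nat.cast_sub (by omega : 1 ≤ h - 1),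
              Nat.cast_sub (by omega : 1 ≤ h)]
            ring
        have hcB : ((h * (h-1) : ℕ) : ℝ) = (h:ℝ) * ((h:ℝ)-1) := by
          push_cast [Nat.cast_sub hh1]
          ring
        have hcC : ((a * (a-1) : ℕ) : ℝ) = (2*(h:ℝ)) * (2*(h:ℝ)-1) := hc2
        rw [hcA, hcB, hcC, hp1, hp2, hp3]
        have h1 : (1:ℝ) ≤ h := by exact_mod_cast hh1
        have hne : (2*(h:ℝ)-1) ≠ 0 := by nlinarith
        have hne2 : ((h:ℝ)*2-1) ≠ 0 := by nlinarith
        field_simp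
        ring
  · -- odd case
    obtain ⟨t, ht⟩ := hpar
    have hA2 : a = 2*t + 1 := ht
    have hat : (a:ℝ) = 2*(t:ℝ)+1 := by exact_mod_cast hA2
    set p1 : ℝ := (a : ℝ) / (a+1) with hp1
    set p2 : ℝ := 1 / ((a:ℝ)+1) with hp2
    have hden : ((a:ℝ)+1) ≠ 0 := by positivity
    refine ⟨fun B => p1 * unifW A t B + p2 * unifW A a B, ?_, ?_, ?_, ?_, ?_⟩
    · intro B
      have h1 := unifW_nonneg A t B
      have h2 := unifW_nonneg A a B
      have hp1' : 0 ≤ p1 := by rw [hp1]; positivity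
      have hp2' : 0 ≤ p2 := by rw [hp2]; positivity
      dsimp only
      exact add_nonneg (mul_nonneg hp1' h1) (mul_nonneg hp2' h2)
    · intro B hB
      have : unifW A t B ≠ 0 ∨ unifW A a B ≠ 0 := by
        by_contra hc
        push_neg at hc
        simp [hc.1, hc.2] at hB
      rcases this with h' | h' <;>
        obtain ⟨hsub, hcard⟩ := unifW_support _ _ _ h' <;> exact ⟨hsub, by omega⟩
    · rw [Finset.sum_add_distrib, ← Finset.mul_sum, ← Finset.mul_sum,
        U0 A t (by omega), U0 A a (by omega)]
      rw [hp1, hp2]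
      field_simp
    · intro u hu
      have ha1 : 1 ≤ a := Finset.card_pos.2 ⟨u, hu⟩
      rw [Finset.sum_add_distrib, ← Finset.mul_sum, ← Finset.mul_sum,
        U1 A t (by omega) u hu, U1 A a (by omega) u hu]
      have ha' : ((a:ℝ)) ≠ 0 := by positivity
      rw [hp1, hp2, hat]
      field_simp
      ring
    · intro u v hu hv huv
      have ha2 : 2 ≤ a := Finset.one_lt_card.2 ⟨u, hu, v, hv, huv⟩
      have ht1 : 1 ≤ t := by omega
      rw [Finset.sum_add_distrib, ← Finset.mul_sum, ← Finset.mul_sum,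
        U2 A t (by omega) u v hu hv huv, U2 A a (by omega) u v hu hv huv]
      have hcA : ((t * (t-1) : ℕ) : ℝ) = (t:ℝ) * ((t:ℝ)-1) := by
        push_cast [Nat.cast_sub ht1]
        ring
      have hcC : ((a * (a-1) : ℕ) : ℝ) = (2*(t:ℝ)+1) * (2*(t:ℝ)) := by
        push_cast [Nat.cast_sub (by omega : 1 ≤ a), hA2]
        ring
      rw [hcA, hcC, hp1, hp2, hat]
      have h1 : (1:ℝ) ≤ t := by exact_mod_cast ht1
      field_simp
      ring
end SchemeBase
section Scheme
variable {V : Type*} [Fintype V]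

lemma scheme (pairs : Finset (V × V)) :
    ∀ (A : Finset V),
    (∀ p ∈ pairs, p.1 ∈ A ∧ p.2 ∈ A ∧ p.1 ≠ p.2) →
    (∀ p ∈ pairs, ∀ p' ∈ pairs, p ≠ p' →
      p.1 ≠ p'.1 ∧ p.1 ≠ p'.2 ∧ p.2 ≠ p'.1 ∧ p.2 ≠ p'.2) →
    ∃ q : Finset V → ℝ, (∀ B, 0 ≤ q B) ∧
      (∀ B, q B ≠ 0 → B ⊆ A ∧ (∀ p ∈ pairs, ¬(p.1 ∈ B ∧ p.2 ∈ B)) ∧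
        A.card ≤ 2 * B.card + 2) ∧
      (∑ B, q B) = 1 ∧
      (∀ u ∈ A, ∑ B ∈ Finset.univ.filter (fun B => u ∈ B), q B = 1/2) ∧
      (∀ u v, u ∈ A → v ∈ A → u ≠ v →
        (∀ p ∈ pairs, ¬(p.1 = u ∧ p.2 = v) ∧ ¬(p.1 = v ∧ p.2 = u)) →
        ∑ B ∈ Finset.univ.filter (fun B => u ∈ B ∧ v ∈ B), q B = 1/4) := by
  induction pairs using Finset.induction_on with
  | empty =>
    intro A _ _
    obtain ⟨q, h0, hs, ht, hm, hpr⟩ := schemeBase A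
    exact ⟨q, h0, fun B hB => ⟨(hs B hB).1, by simp, (hs B hB).2⟩, ht, hm,
      fun u v hu hv huv _ => hpr u v hu hv huv⟩
  | @insert p pairs hpnotin ih =>
    intro A hA hD
    obtain ⟨hx, hy, hxy⟩ := hA p (Finset.mem_insert_self p pairs)
    set x := p.1 with hx_def
    set y := p.2 with hy_def
    set A' := (A.erase x).erase y with hA'_def
    have hyax : y ∈ A.erase x := Finset.mem_erase.2 ⟨hxy.symm, hy⟩
    have hA'card : A'.card = A.card - 2 := by
      rw [hA'_def, Finset.card_erase_of_mem hyax, Finset.card_erase_of_mem hx]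
      omega
    have hxA' : x ∉ A' := by
      rw [hA'_def]
      intro hc
      exact (Finset.mem_erase.1 (Finset.mem_erase.1 hc).2).1 rfl
    have hyA' : y ∉ A' := fun hc => (Finset.mem_erase.1 hc).1 rfl
    have hA'sub : A' ⊆ A := fun z hz =>
      (Finset.mem_erase.1 (Finset.mem_erase.1 hz).2).2
    -- conditions for ih
    have hcond1 : ∀ p' ∈ pairs, p'.1 ∈ A' ∧ p'.2 ∈ A' ∧ p'.1 ≠ p'.2 := by
      intro p' hp'
      have hne : p ≠ p' := fun h => hpnotin (h ▸ hp')
      have hd := hD p (Finset.mem_insert_self p pairs) p' (Finset.mem_insert_of_mem hp') hne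
      have h1 := hA p' (Finset.mem_insert_of_mem hp')
      refine ⟨?_, ?_, h1.2.2⟩
      · rw [hA'_def]
        exact Finset.mem_erase.2 ⟨fun h => hd.2.2.1 h.symm,
          Finset.mem_erase.2 ⟨fun h => hd.1 h.symm, h1.1⟩⟩
      · rw [hA'_def]
        exact Finset.mem_erase.2 ⟨fun h => hd.2.2.2 h.symm,
          Finset.mem_erase.2 ⟨fun h => hd.2.1 h.symm, h1.2.1⟩⟩
    have hcond2 : ∀ p' ∈ pairs, ∀ p'' ∈ pairs, p' ≠ p'' →
        p'.1 ≠ p''.1 ∧ p'.1 ≠ p''.2 ∧ p'.2 ≠ p''.1 ∧ p'.2 ≠ p''.2 := by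
      intro p' h1 p'' h2 hne
      exact hD p' (Finset.mem_insert_of_mem h1) p'' (Finset.mem_insert_of_mem h2) hne
    obtain ⟨q', hq0', hqs', hqt', hqm', hqp'⟩ := ih A' hcond1 hcond2
    -- the new scheme
    set q : Finset V → ℝ := fun B => ∑ B', q' B' *
      ((if B = insert x B' then (1:ℝ)/2 else 0) + (if B = insert y B' then (1:ℝ)/2 else 0))
      with hq_def
    -- key computation
    have key : ∀ (φ : Finset V → Prop) (_ : DecidablePred φ),
        ∑ B ∈ Finset.univ.filter φ, q B
          = ∑ B', q' B' * ((if φ (insert x B') then (1:ℝ)/2 else 0)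
              + (if φ (insert y B') then (1:ℝ)/2 else 0)) := by
      intro φ inst
      rw [Finset.sum_filter]
      have step1 : ∀ B : Finset V,
          (if φ B then q B else 0)
          = ∑ B', ((if B = insert x B' then (if φ B then q' B' * (1/2) else 0) else 0)
              + (if B = insert y B' then (if φ B then q' B' * (1/2) else 0) else 0)) := by
        intro B
        by_cases hφ : φ B
        · simp only [hφ, if_true, hq_def]
          apply Finset.sum_congr rfl
          intro B' _
          split_ifs <;> ring
        · simp only [hφ, if_false]
          rw [Finset.sum_congr rfl (fun B' _ => ?_), Finset.sum_const_zero]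
          split_ifs <;> ring
      rw [Finset.sum_congr rfl (fun B _ => step1 B), Finset.sum_comm]
      apply Finset.sum_congr rfl
      intro B' _
      rw [Finset.sum_add_distrib,
        Finset.sum_ite_eq' Finset.univ (insert x B')
          (fun B => if φ B then q' B' * (1/2) else 0),
        Finset.sum_ite_eq' Finset.univ (insert y B')
          (fun B => if φ B then q' B' * (1/2) else 0)]
      simp only [Finset.mem_univ, if_true]
      split_ifs <;> ring
    refine ⟨q, ?_, ?_, ?_, ?_, ?_⟩
    · -- nonneg
      intro B
      rw [hq_def]
      apply Finset.sum_nonneg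
      intro B' _
      apply mul_nonneg (hq0' B')
      positivity
    · -- support
      intro B hB
      rw [hq_def] at hB
      obtain ⟨B', _, hterm⟩ := Finset.exists_ne_zero_of_sum_ne_zero hB
      have hq'B : q' B' ≠ 0 := fun h => hterm (by rw [h]; ring)
      obtain ⟨hB'A, hB'ind, hB'card⟩ := hqs' B' hq'B
      have hins : B = insert x B' ∨ B = insert y B' := by
        by_contra hc
        push_neg at hc
        simp [hc.1, hc.2] at hterm
      have hAcard : A.card = A'.card + 2 := by
        have h2 : 2 ≤ A.card := Finset.one_lt_card.2 ⟨x, hx, y, hy, hxy⟩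
        omega
      have main : ∀ z, z ∈ A → z ∉ A' → B = insert z B' →
          B ⊆ A ∧ (∀ p' ∈ insert p pairs, ¬(p'.1 ∈ B ∧ p'.2 ∈ B)) ∧
            A.card ≤ 2 * B.card + 2 := by
        intro z hzA hzA' hBz
        have hzB' : z ∉ B' := fun h => hzA' (hB'A h)
        refine ⟨?_, ?_, ?_⟩
        · rw [hBz]
          intro w hw
          rcases Finset.mem_insert.1 hw with rfl | hw
          · exact hzA
          · exact hA'sub (hB'A hw)
        · intro p' hp'
          rcases Finset.mem_insert.1 hp' with rfl | hp'
          · -- p' = p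
            rintro ⟨h1, h2⟩
            rw [hBz] at h1 h2
            have hxz : x = z := by
              rcases Finset.mem_insert.1 h1 with he | h1
              · exact he
              · exact absurd (hB'A h1) hxA'
            have hyz : y = z := by
              rcases Finset.mem_insert.1 h2 with he | h2
              · exact he
              · exact absurd (hB'A h2) hyA'
            exact hxy (hxz.trans hyz.symm)
          · rintro ⟨h1, h2⟩
            rw [hBz] at h1 h2
            have hne : p ≠ p' := fun h => hpnotin (h ▸ hp')
            have hd := hD p (Finset.mem_insert_self p pairs) p'
              (Finset.mem_insert_of_mem hp') hne
            have hc1 := hcond1 p' hp'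
            have h1' : p'.1 ∈ B' := by
              rcases Finset.mem_insert.1 h1 with he | h1
              · exfalso; exact hzA' (he ▸ hc1.1)
              · exact h1
            have h2' : p'.2 ∈ B' := by
              rcases Finset.mem_insert.1 h2 with he | h2
              · exfalso; exact hzA' (he ▸ hc1.2.1)
              · exact h2
            exact hB'ind p' hp' ⟨h1', h2'⟩
        · rw [hBz, Finset.card_insert_of_notMem hzB']
          omega
      rcases hins with hBz | hBz
      · exact main x hx hxA' hBz
      · exact main y hy hyA' hBz
    · -- total
      have := key (fun _ => True) (by infer_instance)
      simp only [Finset.filter_true, if_true] at this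
      rw [this]
      have : ∀ B', q' B' * ((1:ℝ)/2 + 1/2) = q' B' := fun B' => by ring
      rw [Finset.sum_congr rfl (fun B' _ => this B')]
      exact hqt'
    · -- marginal
      intro u hu
      rw [key _ _]
      by_cases hux : u = x
      · have heq : ∀ B', q' B' * ((if u ∈ insert x B' then (1:ℝ)/2 else 0)
            + (if u ∈ insert y B' then (1:ℝ)/2 else 0)) = q' B' * (1/2) := by
          intro B'
          by_cases h0 : q' B' = 0
          · rw [h0]; ring
          · have hB'A := (hqs' B' h0).1
            have h1 : u ∈ insert x B' := by rw [hux]; exact Finset.mem_insert_self x B'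
            have h2 : u ∉ insert y B' := by
              intro hc
              rcases Finset.mem_insert.1 hc with he | hc
              · exact hxy (hux ▸ he)
              · exact hxA' (hB'A (hux ▸ hc))
            simp [h1, h2]
        rw [Finset.sum_congr rfl (fun B' _ => heq B'), ← Finset.sum_mul, hqt']
        ring
      · by_cases huy : u = y
        · have heq : ∀ B', q' B' * ((if u ∈ insert x B' then (1:ℝ)/2 else 0)
              + (if u ∈ insert y B' then (1:ℝ)/2 else 0)) = q' B' * (1/2) := by
            intro B'
            by_cases h0 : q' B' = 0
            · rw [h0]; ring
            · have hB'A := (hqs' B' h0).1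
              have h1 : u ∈ insert y B' := by rw [huy]; exact Finset.mem_insert_self y B'
              have h2 : u ∉ insert x B' := by
                intro hc
                rcases Finset.mem_insert.1 hc with he | hc
                · exact hxy (huy ▸ he).symm
                · exact hyA' (hB'A (huy ▸ hc))
              simp [h1, h2]
          rw [Finset.sum_congr rfl (fun B' _ => heq B'), ← Finset.sum_mul, hqt']
          ring
        · have huA' : u ∈ A' := by
            rw [hA'_def]
            exact Finset.mem_erase.2 ⟨huy, Finset.mem_erase.2 ⟨hux, hu⟩⟩
          have heq : ∀ B', q' B' * ((if u ∈ insert x B' then (1:ℝ)/2 else 0)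
              + (if u ∈ insert y B' then (1:ℝ)/2 else 0))
              = (if u ∈ B' then q' B' else 0) := by
            intro B'
            have h1 : u ∈ insert x B' ↔ u ∈ B' := by
              rw [Finset.mem_insert]
              exact or_iff_right hux
            have h2 : u ∈ insert y B' ↔ u ∈ B' := by
              rw [Finset.mem_insert]
              exact or_iff_right huy
            rw [if_congr h1 rfl rfl, if_congr h2 rfl rfl]
            split_ifs <;> ring
          rw [Finset.sum_congr rfl (fun B' _ => heq B'), ← Finset.sum_filter]
          exact hqm' u huA'
    · -- pair coverage
      intro u v hu hv huv hexc
      have hexcp := hexc p (Finset.mem_insert_self p pairs)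
      rw [key _ _]
      -- first variant : u is one of the special vertices, v generic
      have pairL : ∀ (hz : u = x ∨ u = y), v ≠ x → v ≠ y → v ∈ A' →
          ∑ B', q' B' * ((if (u ∈ insert x B' ∧ v ∈ insert x B') then (1:ℝ)/2 else 0)
            + (if (u ∈ insert y B' ∧ v ∈ insert y B') then (1:ℝ)/2 else 0)) = 1/4 := by
        intro hz hvx hvy hvA'
        have heq : ∀ B', q' B' * ((if (u ∈ insert x B' ∧ v ∈ insert x B') then (1:ℝ)/2 else 0)
            + (if (u ∈ insert y B' ∧ v ∈ insert y B') then (1:ℝ)/2 else 0))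
            = (if v ∈ B' then q' B' * (1/2) else 0) := by
          intro B'
          by_cases h0 : q' B' = 0
          · rw [h0]; simp
          · have hB'A := (hqs' B' h0).1
            have hvx' : v ∈ insert x B' ↔ v ∈ B' := by
              rw [Finset.mem_insert]; exact or_iff_right hvx
            have hvy' : v ∈ insert y B' ↔ v ∈ B' := by
              rw [Finset.mem_insert]; exact or_iff_right hvy
            rcases hz with hux | huy
            · have h1 : u ∈ insert x B' := by rw [hux]; exact Finset.mem_insert_self x B'
              have h2 : u ∉ insert y B' := by
                intro hc
                rcases Finset.mem_insert.1 hc with he | hc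
                · exact hxy (hux ▸ he)
                · exact hxA' (hB'A (hux ▸ hc))
              simp only [h1, true_and, h2, false_and, if_false, add_zero,
                if_congr hvx' rfl rfl]
              split_ifs <;> ring
            · have h1 : u ∈ insert y B' := by rw [huy]; exact Finset.mem_insert_self y B'
              have h2 : u ∉ insert x B' := by
                intro hc
                rcases Finset.mem_insert.1 hc with he | hc
                · exact hxy (huy ▸ he).symm
                · exact hyA' (hB'A (huy ▸ hc))
              simp only [h1, true_and, h2, false_and, if_false, zero_add,
                if_congr hvy' rfl rfl]
              split_ifs <;> ring
        rw [Finset.sum_congr rfl (fun B' _ => heq B')]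
        have hsplit : ∑ B', (if v ∈ B' then q' B' * (1/2) else 0)
            = (∑ B' ∈ Finset.univ.filter (fun B' => v ∈ B'), q' B') * (1/2) := by
          rw [Finset.sum_mul, ← Finset.sum_filter]
        rw [hsplit, hqm' v hvA']
        ring
      -- second variant : v is special, u generic
      have pairR : ∀ (hz : v = x ∨ v = y), u ≠ x → u ≠ y → u ∈ A' →
          ∑ B', q' B' * ((if (u ∈ insert x B' ∧ v ∈ insert x B') then (1:ℝ)/2 else 0)
            + (if (u ∈ insert y B' ∧ v ∈ insert y B') then (1:ℝ)/2 else 0)) = 1/4 := by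
        intro hz hux huy huA'
        have heq : ∀ B', q' B' * ((if (u ∈ insert x B' ∧ v ∈ insert x B') then (1:ℝ)/2 else 0)
            + (if (u ∈ insert y B' ∧ v ∈ insert y B') then (1:ℝ)/2 else 0))
            = (if u ∈ B' then q' B' * (1/2) else 0) := by
          intro B'
          by_cases h0 : q' B' = 0
          · rw [h0]; simp
          · have hB'A := (hqs' B' h0).1
            have hux' : u ∈ insert x B' ↔ u ∈ B' := by
              rw [Finset.mem_insert]; exact or_iff_right hux
            have huy' : u ∈ insert y B' ↔ u ∈ B' := by
              rw [Finset.mem_insert]; exact or_iff_right huy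
            rcases hz with hvx | hvy
            · have h1 : v ∈ insert x B' := by rw [hvx]; exact Finset.mem_insert_self x B'
              have h2 : v ∉ insert y B' := by
                intro hc
                rcases Finset.mem_insert.1 hc with he | hc
                · exact hxy (hvx ▸ he)
                · exact hxA' (hB'A (hvx ▸ hc))
              simp only [h1, and_true, h2, and_false, if_false, add_zero,
                if_congr hux' rfl rfl]
              split_ifs <;> ring
            · have h1 : v ∈ insert y B' := by rw [hvy]; exact Finset.mem_insert_self y B'
              have h2 : v ∉ insert x B' := by
                intro hc
                rcases Finset.mem_insert.1 hc with he | hc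
                · exact hxy (hvy ▸ he).symm
                · exact hyA' (hB'A (hvy ▸ hc))
              simp only [h1, and_true, h2, and_false, if_false, zero_add,
                if_congr huy' rfl rfl]
              split_ifs <;> ring
        rw [Finset.sum_congr rfl (fun B' _ => heq B')]
        have hsplit : ∑ B', (if u ∈ B' then q' B' * (1/2) else 0)
            = (∑ B' ∈ Finset.univ.filter (fun B' => u ∈ B'), q' B') * (1/2) := by
          rw [Finset.sum_mul, ← Finset.sum_filter]
        rw [hsplit, hqm' u huA']
        ring
      by_cases hux : u = x
      · have hvy : v ≠ y := fun hvy => hexcp.1 ⟨hux.symm, hvy.symm⟩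
        have hvx : v ≠ x := fun h => huv (hux.trans h.symm)
        exact pairL (Or.inl hux) hvx hvy
          (Finset.mem_erase.2 ⟨hvy, Finset.mem_erase.2 ⟨hvx, hv⟩⟩)
      · by_cases huy : u = y
        · have hvx : v ≠ x := fun hvx => hexcp.2 ⟨hvx.symm, huy.symm⟩
          have hvy : v ≠ y := fun h => huv (huy.trans h.symm)
          exact pairL (Or.inr huy) hvx hvy
            (Finset.mem_erase.2 ⟨hvy, Finset.mem_erase.2 ⟨hvx, hv⟩⟩)
        · by_cases hvx : v = x
          · exact pairR (Or.inl hvx) hux huy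
              (Finset.mem_erase.2 ⟨huy, Finset.mem_erase.2 ⟨hux, hu⟩⟩)
          · by_cases hvy : v = y
            · exact pairR (Or.inr hvy) hux huy
                (Finset.mem_erase.2 ⟨huy, Finset.mem_erase.2 ⟨hux, hu⟩⟩)
            · have huA' : u ∈ A' :=
                Finset.mem_erase.2 ⟨huy, Finset.mem_erase.2 ⟨hux, hu⟩⟩
              have hvA' : v ∈ A' :=
                Finset.mem_erase.2 ⟨hvy, Finset.mem_erase.2 ⟨hvx, hv⟩⟩
              have heq : ∀ B', q' B' *
                  ((if (u ∈ insert x B' ∧ v ∈ insert x B') then (1:ℝ)/2 else 0)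
                  + (if (u ∈ insert y B' ∧ v ∈ insert y B') then (1:ℝ)/2 else 0))
                  = (if u ∈ B' ∧ v ∈ B' then q' B' else 0) := by
                intro B'
                have h1 : u ∈ insert x B' ↔ u ∈ B' := by
                  rw [Finset.mem_insert]; exact or_iff_right hux
                have h2 : v ∈ insert x B' ↔ v ∈ B' := by
                  rw [Finset.mem_insert]; exact or_iff_right hvx
                have h3 : u ∈ insert y B' ↔ u ∈ B' := by
                  rw [Finset.mem_insert]; exact or_iff_right huy
                have h4 : v ∈ insert y B' ↔ v ∈ B' := by
                  rw [Finset.mem_insert]; exact or_iff_right hvy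
                rw [if_congr (and_congr h1 h2) rfl rfl, if_congr (and_congr h3 h4) rfl rfl]
                split_ifs <;> ring
              rw [Finset.sum_congr rfl (fun B' _ => heq B'), ← Finset.sum_filter]
              apply hqp' u v huA' hvA' huv
              intro p' hp'
              exact hexc p' (Finset.mem_insert_of_mem hp')
end Scheme
section Glue
variable {V : Type*} [Fintype V]

lemma LS (H : SimpleGraph V) (r : ℕ) (A : Finset V) (pairs : Finset (V × V))
    (h1 : ∀ p ∈ pairs, p.1 ∈ A ∧ p.2 ∈ A ∧ p.1 ≠ p.2)
    (h2 : ∀ p ∈ pairs, ∀ p' ∈ pairs, p ≠ p' →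
      p.1 ≠ p'.1 ∧ p.1 ≠ p'.2 ∧ p.2 ≠ p'.1 ∧ p.2 ≠ p'.2)
    (h3 : ∀ p ∈ pairs, ¬ H.Adj p.1 p.2)
    (hind : ∀ B, B ⊆ A → (∀ p ∈ pairs, ¬(p.1 ∈ B ∧ p.2 ∈ B)) →
      A.card ≤ 2 * B.card + 2 → goodOn H r B) :
    goodOn H r A := by
  obtain ⟨q, hq0, hqs, hqt, hqm, hqp⟩ := scheme pairs A h1 h2
  have hch : ∀ B : Finset V, ∃ w : Finset V → ℝ,
      q B ≠ 0 → ((∀ s, 0 ≤ w s) ∧ (∀ s, w s ≠ 0 → s ⊆ B) ∧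
        ∀ u v, u ∈ B → v ∈ B → H.Adj u v → covW H r w u v = 1) := by
    intro B
    by_cases h0 : q B = 0
    · exact ⟨fun _ => 0, fun hc => absurd h0 hc⟩
    · obtain ⟨hBA, hBind, hBcard⟩ := hqs B h0
      obtain ⟨w, hw1, hw2, hw3⟩ := hind B hBA hBind hBcard
      exact ⟨w, fun _ => ⟨hw1, hw2, hw3⟩⟩
  choose W hW using hch
  refine ⟨fun s => ∑ B, 4 * q B * W B s, ?_, ?_, ?_⟩
  · intro s
    apply Finset.sum_nonneg
    intro B _
    by_cases h0 : q B = 0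
    · simp [h0]
    · have := (hW B h0).1 s
      have := hq0 B
      nlinarith
  · intro s hs
    obtain ⟨B, _, hterm⟩ := Finset.exists_ne_zero_of_sum_ne_zero hs
    have h0 : q B ≠ 0 := by
      intro h
      rw [h] at hterm
      simp at hterm
    have hWs : W B s ≠ 0 := by
      intro h
      rw [h] at hterm
      simp at hterm
    exact ((hW B h0).2.1 s hWs).trans (hqs B h0).1
  · intro u v hu hv hadj
    have expand : covW H r (fun s => ∑ B, 4 * q B * W B s) u v
        = ∑ B, 4 * q B * covW H r (W B) u v := by
      unfold covW
      rw [Finset.sum_comm]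
      apply Finset.sum_congr rfl
      intro B _
      exact (Finset.mul_sum _ _ _).symm
    rw [expand]
    have hterm : ∀ B : Finset V, 4 * q B * covW H r (W B) u v
        = (if u ∈ B ∧ v ∈ B then 4 * q B else 0) := by
      intro B
      by_cases h0 : q B = 0
      · simp [h0]
      · by_cases hmem : u ∈ B ∧ v ∈ B
        · rw [(hW B h0).2.2 u v hmem.1 hmem.2 hadj, if_pos hmem]
          ring
        · have hcov : covW H r (W B) u v = 0 := by
            unfold covW
            apply Finset.sum_eq_zero
            intro s hsmem
            simp only [Finset.mem_filter] at hsmem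
            by_contra hWs
            have hsB := (hW B h0).2.1 s hWs
            exact hmem ⟨hsB hsmem.2.2.1, hsB hsmem.2.2.2⟩
          rw [hcov, if_neg hmem]
          ring
    rw [Finset.sum_congr rfl (fun B _ => hterm B), ← Finset.sum_filter]
    have hpair := hqp u v hu hv hadj.ne ?_
    · rw [Finset.sum_filter, ← Finset.sum_filter]
      have : ∀ B ∈ Finset.univ.filter (fun B : Finset V => u ∈ B ∧ v ∈ B),
          (4:ℝ) * q B = 4 * q B := fun _ _ => rfl
      rw [show ∑ B ∈ Finset.univ.filter (fun B : Finset V => u ∈ B ∧ v ∈ B), (4:ℝ) * q B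
          = 4 * ∑ B ∈ Finset.univ.filter (fun B : Finset V => u ∈ B ∧ v ∈ B), q B from
          (Finset.mul_sum _ _ _).symm, hpair]
      norm_num
    · intro p hp
      constructor
      · rintro ⟨he1, he2⟩
        exact h3 p hp (he1 ▸ he2 ▸ hadj)
      · rintro ⟨he1, he2⟩
        exact h3 p hp (he1 ▸ he2 ▸ hadj.symm)

lemma L0 (H : SimpleGraph V) (r : ℕ) (A : Finset V)
    (hA : ∀ u ∈ A, ∀ v ∈ A, u ≠ v → H.Adj u v) (h2r : 2 ≤ r) (hr : r ≤ A.card) :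
    goodOn H r A := by
  obtain ⟨k, rfl⟩ : ∃ k, r = k + 2 := ⟨r - 2, by omega⟩
  have hcp : 0 < (A.card - 2).choose k := Nat.choose_pos (by omega)
  have hcp' : ((A.card - 2).choose k : ℝ) ≠ 0 := by exact_mod_cast hcp.ne'
  refine ⟨fun s => if s ∈ Finset.powersetCard (k+2) A
    then ((A.card - 2).choose k : ℝ)⁻¹ else 0, ?_, ?_, ?_⟩
  · intro s; positivity
  · intro s hs
    by_cases hmem : s ∈ Finset.powersetCard (k+2) A
    · exact (Finset.mem_powersetCard.1 hmem).1
    · simp [hmem] at hs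
  · intro u v hu hv hadj
    unfold covW
    rw [sum_indicator_filter]
    have hset : (Finset.powersetCard (k+2) A).filter
        (fun s => H.IsNClique (k+2) s ∧ u ∈ s ∧ v ∈ s)
        = (Finset.powersetCard (k+2) A).filter (fun s => u ∈ s ∧ v ∈ s) := by
      apply Finset.filter_congr
      intro s hsmem
      obtain ⟨hsub, hcard⟩ := Finset.mem_powersetCard.1 hsmem
      simp only [and_iff_right_iff_imp]
      intro _
      constructor
      · intro a ha b hb hne
        exact hA a (hsub ha) b (hsub hb) hne
      · exact hcard
    rw [hset, cnt2 A u v hu hv hadj.ne k]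
    exact mul_inv_cancel₀ hcp'

lemma Ldel (H : SimpleGraph V) (r : ℕ) (A : Finset V) (h3 : 3 ≤ A.card)
    (hdel : ∀ v ∈ A, goodOn H r (A.erase v)) : goodOn H r A := by
  have hch : ∀ v : V, ∃ w : Finset V → ℝ,
      v ∈ A → ((∀ s, 0 ≤ w s) ∧ (∀ s, w s ≠ 0 → s ⊆ A.erase v) ∧
        ∀ a b, a ∈ A.erase v → b ∈ A.erase v → H.Adj a b → covW H r w a b = 1) := by
    intro v
    by_cases hv : v ∈ A
    · obtain ⟨w, hw1, hw2, hw3⟩ := hdel v hv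
      exact ⟨w, fun _ => ⟨hw1, hw2, hw3⟩⟩
    · exact ⟨fun _ => 0, fun hc => absurd hc hv⟩
  choose W hW using hch
  have hc2 : ((A.card : ℝ) - 2) ≠ 0 := by
    have : (3:ℝ) ≤ A.card := by exact_mod_cast h3
    linarith
  have hc2' : (0:ℝ) ≤ ((A.card : ℝ) - 2)⁻¹ := by
    have : (3:ℝ) ≤ A.card := by exact_mod_cast h3
    have : (0:ℝ) < (A.card : ℝ) - 2 := by linarith
    positivity
  refine ⟨fun s => ∑ v ∈ A, ((A.card : ℝ) - 2)⁻¹ * W v s, ?_, ?_, ?_⟩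
  · intro s
    apply Finset.sum_nonneg
    intro v hv
    exact mul_nonneg hc2' ((hW v hv).1 s)
  · intro s hs
    obtain ⟨v, hv, hterm⟩ := Finset.exists_ne_zero_of_sum_ne_zero hs
    have hWs : W v s ≠ 0 := by
      intro h; rw [h] at hterm; simp at hterm
    exact ((hW v hv).2.1 s hWs).trans (Finset.erase_subset v A)
  · intro u u' hu hu' hadj
    have expand : covW H r (fun s => ∑ v ∈ A, ((A.card : ℝ) - 2)⁻¹ * W v s) u u'
        = ∑ v ∈ A, ((A.card : ℝ) - 2)⁻¹ * covW H r (W v) u u' := by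
      unfold covW
      rw [Finset.sum_comm]
      apply Finset.sum_congr rfl
      intro v _
      exact (Finset.mul_sum _ _ _).symm
    rw [expand]
    have hterm : ∀ v ∈ A, ((A.card : ℝ) - 2)⁻¹ * covW H r (W v) u u'
        = (if v = u ∨ v = u' then 0 else ((A.card : ℝ) - 2)⁻¹) := by
      intro v hv
      by_cases hvu : v = u ∨ v = u'
      · have hcov : covW H r (W v) u u' = 0 := by
          unfold covW
          apply Finset.sum_eq_zero
          intro s hsmem
          simp only [Finset.mem_filter] at hsmem
          by_contra hWs
          have hsB := (hW v hv).2.1 s hWs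
          rcases hvu with rfl | rfl
          · exact (Finset.mem_erase.1 (hsB hsmem.2.2.1)).1 rfl
          · exact (Finset.mem_erase.1 (hsB hsmem.2.2.2)).1 rfl
        rw [hcov, if_pos hvu]
        ring
      · push_neg at hvu
        have hcov : covW H r (W v) u u' = 1 := by
          apply (hW v hv).2.2 u u'
          · exact Finset.mem_erase.2 ⟨fun h => hvu.1 h.symm, hu⟩
          · exact Finset.mem_erase.2 ⟨fun h => hvu.2 h.symm, hu'⟩
          · exact hadj
        rw [hcov, if_neg (by push_neg; exact hvu)]
        ring
    rw [Finset.sum_congr rfl hterm]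
    rw [Finset.sum_ite, Finset.sum_const_zero, Finset.sum_const, zero_add, nsmul_eq_mul]
    have hfc : (A.filter (fun v => ¬(v = u ∨ v = u'))).card = A.card - 2 := by
      have hset : A.filter (fun v => ¬(v = u ∨ v = u')) = (A.erase u).erase u' := by
        ext z
        simp only [Finset.mem_filter, Finset.mem_erase, not_or]
        tauto
      rw [hset, Finset.card_erase_of_mem (Finset.mem_erase.2 ⟨fun h => hadj.ne h.symm, hu'⟩),
        Finset.card_erase_of_mem hu]
      omega
    rw [hfc]
    have : ((A.card - 2 : ℕ) : ℝ) = (A.card : ℝ) - 2 := by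
      push_cast [Nat.cast_sub (by omega : 2 ≤ A.card)]
      ring
    rw [this]
    exact mul_inv_cancel₀ hc2
end Glue
section L2sec
variable {V : Type*} [Fintype V]

lemma L2 (H : SimpleGraph V) (r : ℕ) (hr : 3 ≤ r) (A : Finset V)
    (hA : 4 * r + 6 ≤ A.card) (pairs1 pairs2 : Finset (V × V))
    (h11 : ∀ p ∈ pairs1, p.1 ∈ A ∧ p.2 ∈ A ∧ p.1 ≠ p.2)
    (h12 : ∀ p ∈ pairs1, ∀ p' ∈ pairs1, p ≠ p' →
      p.1 ≠ p'.1 ∧ p.1 ≠ p'.2 ∧ p.2 ≠ p'.1 ∧ p.2 ≠ p'.2)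
    (h13 : ∀ p ∈ pairs1, ¬ H.Adj p.1 p.2)
    (h21 : ∀ p ∈ pairs2, p.1 ∈ A ∧ p.2 ∈ A ∧ p.1 ≠ p.2)
    (h22 : ∀ p ∈ pairs2, ∀ p' ∈ pairs2, p ≠ p' →
      p.1 ≠ p'.1 ∧ p.1 ≠ p'.2 ∧ p.2 ≠ p'.1 ∧ p.2 ≠ p'.2)
    (h23 : ∀ p ∈ pairs2, ¬ H.Adj p.1 p.2)
    (cover : ∀ u v, u ∈ A → v ∈ A → u ≠ v → ¬ H.Adj u v →
      ∃ p, (p ∈ pairs1 ∨ p ∈ pairs2) ∧ ((p.1 = u ∧ p.2 = v) ∨ (p.1 = v ∧ p.2 = u))) :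
    goodOn H r A := by
  classical
  apply LS H r A pairs1 h11 h12 h13
  intro B hBA hBind hBcard
  set pairs2' := pairs2.filter (fun p => p.1 ∈ B ∧ p.2 ∈ B) with hp2'
  apply LS H r B pairs2'
  · intro p hp
    simp only [hp2', Finset.mem_filter] at hp
    exact ⟨hp.2.1, hp.2.2, (h21 p hp.1).2.2⟩
  · intro p hp p' hp' hne
    simp only [hp2', Finset.mem_filter] at hp hp'
    exact h22 p hp.1 p' hp'.1 hne
  · intro p hp
    simp only [hp2', Finset.mem_filter] at hp
    exact h23 p hp.1
  · intro B' hB'B hB'ind hB'card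
    apply L0 H r B'
    · intro u hu v hv huv
      by_contra hnadj
      obtain ⟨p, hp, hrep⟩ := cover u v (hBA (hB'B hu)) (hBA (hB'B hv)) huv hnadj
      have hpB : p.1 ∈ B' ∧ p.2 ∈ B' := by
        rcases hrep with ⟨h1, h2⟩ | ⟨h1, h2⟩
        · exact ⟨h1 ▸ hu, h2 ▸ hv⟩
        · exact ⟨h1 ▸ hv, h2 ▸ hu⟩
      rcases hp with hp | hp
      · exact hBind p hp ⟨hB'B hpB.1, hB'B hpB.2⟩
      · have hpmem : p ∈ pairs2' := by
          simp only [hp2', Finset.mem_filter]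
          exact ⟨hp, hB'B hpB.1, hB'B hpB.2⟩
        exact hB'ind p hpmem hpB
    · omega
    · omega
end L2sec
section Assembly
variable {V : Type*} [Fintype V]

lemma val_add_one {n : ℕ} [NeZero n] (hn2 : 2 ≤ n) (i : Fin n) :
    (i + 1).val = (i.val + 1) % n := by
  rw [Fin.val_add, Fin.val_one']
  rw [Nat.mod_eq_of_lt (show 1 < n by omega)]

lemma LC (H : SimpleGraph V) (r n : ℕ) (hr : 3 ≤ r) (hn : 4*r+6 ≤ n) [NeZero n]
    (e : Fin n ≃ V)
    (hrep : ∀ u v : V, u ≠ v → ¬ H.Adj u v →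
      ∃ i : Fin n, (e i = u ∧ e (i+1) = v) ∨ (e i = v ∧ e (i+1) = u))
    (A : Finset V) (hA : 4*r+6 ≤ A.card) (m : Fin n)
    (hOK : Even n ∨ ∀ i : Fin n, e i ∈ A → i ≠ m) :
    goodOn H r A := by
  classical
  have hn2 : 2 ≤ n := by omega
  have hne1 : ∀ i : Fin n, e i ≠ e (i+1) := by
    intro i h
    have hv := congrArg Fin.val (e.injective h)
    rw [val_add_one hn2] at hv
    by_cases hlt : i.val + 1 < n
    · rw [Nat.mod_eq_of_lt hlt] at hv; omega
    · have hi := i.isLt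
      have : i.val + 1 = n := by omega
      rw [this, Nat.mod_self] at hv
      omega
  set c : Fin n → Bool := fun i => decide ((i - (m+1)).val % 2 = 0) with hc_def
  have hflip : ∀ i : Fin n, (Even n ∨ i ≠ m) → c i ≠ c (i+1) := by
    intro i hok
    set k := i - (m+1) with hk
    have hk' : i + 1 - (m+1) = k + 1 := by rw [hk]; abel
    show ¬(decide ((i - (m+1)).val % 2 = 0) = decide (((i+1) - (m+1)).val % 2 = 0))
    rw [hk', ← hk]
    by_cases hklt : k.val + 1 < n
    · have hv : (k+1 : Fin n).val = k.val + 1 := by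
        rw [val_add_one hn2, Nat.mod_eq_of_lt hklt]
      rw [hv]
      simp only [ne_eq, decide_eq_decide]
      omega
    · have hkn : k.val = n - 1 := by have := k.isLt; omega
      have hk10 : (k + 1 : Fin n) = 0 := by
        apply Fin.ext
        rw [val_add_one hn2, hkn, Fin.val_zero,
          Nat.sub_add_cancel (by omega : 1 ≤ n), Nat.mod_self]
      have him : i = m := by
        have h2 : i + 1 = m + 1 := by
          have h3 : i + 1 - (m+1) = 0 := hk'.trans hk10
          exact sub_eq_zero.1 h3
        exact add_right_cancel h2
      rcases hok with hev | hnem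
      · have h0 : ((0 : Fin n) : ℕ) = 0 := Fin.val_zero n
        rw [hk10, decide_eq_decide, h0, hkn]
        obtain ⟨w, hw⟩ := hev
        subst hw
        omega
      · exact absurd him hnem
  set active : Fin n → Prop :=
    fun i => e i ∈ A ∧ e (i+1) ∈ A ∧ ¬ H.Adj (e i) (e (i+1)) with hact_def
  have hOK' : ∀ i : Fin n, active i → (Even n ∨ i ≠ m) := by
    rcases hOK with hev | hfn
    · exact fun _ _ => Or.inl hev
    · exact fun i hi => Or.inr (hfn i hi.1)
  set pairsb : Bool → Finset (V × V) := fun b =>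
    (Finset.univ.filter (fun i : Fin n => active i ∧ c i = b)).image
      (fun i => (e i, e (i+1))) with hpb_def
  have hmem : ∀ b (p : V × V), p ∈ pairsb b →
      ∃ i : Fin n, active i ∧ c i = b ∧ p = (e i, e (i+1)) := by
    intro b p hp
    simp only [hpb_def, Finset.mem_image, Finset.mem_filter, Finset.mem_univ, true_and] at hp
    obtain ⟨i, ⟨hi1, hi2⟩, hi3⟩ := hp
    exact ⟨i, hi1, hi2, hi3.symm⟩
  have h1 : ∀ b, ∀ p ∈ pairsb b, p.1 ∈ A ∧ p.2 ∈ A ∧ p.1 ≠ p.2 := by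
    intro b p hp
    obtain ⟨i, hi, _, rfl⟩ := hmem b p hp
    exact ⟨hi.1, hi.2.1, hne1 i⟩
  have h3 : ∀ b, ∀ p ∈ pairsb b, ¬ H.Adj p.1 p.2 := by
    intro b p hp
    obtain ⟨i, hi, _, rfl⟩ := hmem b p hp
    exact hi.2.2
  have hD : ∀ b, ∀ p ∈ pairsb b, ∀ p' ∈ pairsb b, p ≠ p' →
      p.1 ≠ p'.1 ∧ p.1 ≠ p'.2 ∧ p.2 ≠ p'.1 ∧ p.2 ≠ p'.2 := by
    intro b p hp p' hp' hne
    obtain ⟨i, hi, hci, rfl⟩ := hmem b p hp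
    obtain ⟨j, hj, hcj, rfl⟩ := hmem b p' hp'
    have hij : i ≠ j := by
      rintro rfl
      exact hne rfl
    refine ⟨?_, ?_, ?_, ?_⟩
    · simp only [ne_eq]
      intro h
      exact hij (e.injective h)
    · intro h
      have hieq : i = j + 1 := e.injective h
      have := hflip j (hOK' j hj)
      rw [← hieq, hci, hcj] at this
      exact this rfl
    · intro h
      have hieq : i + 1 = j := e.injective h
      have := hflip i (hOK' i hi)
      rw [hieq, hci, hcj] at this
      exact this rfl
    · intro h
      have hieq : i + 1 = j + 1 := e.injective h
      exact hij (add_right_cancel hieq)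
  apply L2 H r hr A hA (pairsb true) (pairsb false) (h1 true) (hD true) (h3 true)
    (h1 false) (hD false) (h3 false)
  intro u v hu hv huv hnadj
  obtain ⟨i, hi⟩ := hrep u v huv hnadj
  have hact : active i := by
    rcases hi with ⟨h1', h2'⟩ | ⟨h1', h2'⟩
    · exact ⟨h1' ▸ hu, h2' ▸ hv, by rw [h1', h2']; exact hnadj⟩
    · exact ⟨h1' ▸ hv, h2' ▸ hu, by rw [h1', h2']; exact fun h => hnadj h.symm⟩
  refine ⟨(e i, e (i+1)), ?_, ?_⟩
  · have hmem' : (e i, e (i+1)) ∈ pairsb (c i) := by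
      simp only [hpb_def, Finset.mem_image, Finset.mem_filter, Finset.mem_univ, true_and]
      exact ⟨i, ⟨hact, rfl⟩, rfl⟩
    cases hcb : c i
    · right; rw [hcb] at hmem'; exact hmem'
    · left; rw [hcb] at hmem'; exact hmem'
  · rcases hi with ⟨h1', h2'⟩ | ⟨h1', h2'⟩
    · exact Or.inl ⟨h1', h2'⟩
    · exact Or.inr ⟨h1', h2'⟩
end Assembly
/-- If the complement of `H` is a subgraph of a Hamilton cycle (given by the cyclic
ordering `e : Fin n ≃ V`) and `n ≥ 4r + 6`, then `H` has a fractional `K_r`-decomposition. -/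
theorem stmt19 {V : Type*} [Fintype V] (H : SimpleGraph V) (r n : ℕ)
    (hr : 3 ≤ r) (hn : 4 * r + 6 ≤ n) (hcard : Fintype.card V = n)
    (e : Fin n ≃ V)
    (hcyc : ∀ u v : V, Hᶜ.Adj u v →
      ((e.symm u).val + 1) % n = (e.symm v).val ∨ ((e.symm v).val + 1) % n = (e.symm u).val) :
    fracCliqueDecomp H r := by
  haveI : NeZero n := ⟨by omega⟩
  have hn2 : 2 ≤ n := by omega
  have hrep : ∀ u v : V, u ≠ v → ¬ H.Adj u v →
      ∃ i : Fin n, (e i = u ∧ e (i+1) = v) ∨ (e i = v ∧ e (i+1) = u) := by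
    intro u v huv hnadj
    have hcadj : Hᶜ.Adj u v := by
      rw [SimpleGraph.compl_adj]
      exact ⟨huv, hnadj⟩
    rcases hcyc u v hcadj with h | h
    · refine ⟨e.symm u, Or.inl ⟨e.apply_symm_apply u, ?_⟩⟩
      have heq : (e.symm u + 1 : Fin n) = e.symm v := by
        apply Fin.ext
        rw [val_add_one hn2, h]
      rw [heq, e.apply_symm_apply]
    · refine ⟨e.symm v, Or.inr ⟨e.apply_symm_apply v, ?_⟩⟩
      have heq : (e.symm v + 1 : Fin n) = e.symm u := by
        apply Fin.ext
        rw [val_add_one hn2, h]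
      rw [heq, e.apply_symm_apply]
  have hcardU : (Finset.univ : Finset V).card = n := by
    rw [Finset.card_univ, hcard]
  have hgood : goodOn H r (Finset.univ : Finset V) := by
    by_cases hev : Even n
    · exact LC H r n hr hn e hrep Finset.univ (by rw [hcardU]; exact hn) 0 (Or.inl hev)
    · apply Ldel H r Finset.univ (by omega)
      intro v _
      have hnodd : n % 2 = 1 := Nat.not_even_iff.1 hev
      have hcardA : (Finset.univ.erase v).card = n - 1 := by
        rw [Finset.card_erase_of_mem (Finset.mem_univ v), hcardU]
      apply LC H r n hr hn e hrep (Finset.univ.erase v) (by omega) (e.symm v)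
      right
      intro i hi hieq
      have : e i = v := by rw [hieq, e.apply_symm_apply]
      exact (Finset.mem_erase.1 hi).1 this
  obtain ⟨w, hw0, _, hwc⟩ := hgood
  refine ⟨w, hw0, fun u v hadj => ?_⟩
  exact hwc u v (Finset.mem_univ u) (Finset.mem_univ v) hadj
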